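/- Let Y be a set, F a convex cone of functions Y → [0,∞] (closed under addition and multiplication by positive scalars), and f₀ ∈ F with 0 < f₀(y) < ∞ for all y. For φ : Y → [0,∞] define F_φ := inf { f ∈ F : f ≥ φ pointwise } (pointwise infimum). Suppose A ⊆ Y and there exist α, M ∈ (1,∞) such that α·φ(y) ≤ min(F_φ(y), M·f₀(y)) for all y ∈ A. Then F_{φ·1_{Y∖A}} = F_φ, i.e. the envelope of φ restricted to the complement of A equals the envelope of φ. -/

import Mathlib

open scoped ENNReal

/-- Envelope with respect to a convex cone of nonnegative extended-real functions. -/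
noncomputable def coneEnvelope {Y : Type*} (F : Set (Y → ℝ≥0∞)) (φ : Y → ℝ≥0∞) : Y → ℝ≥0∞ :=
  fun y => ⨅ f ∈ {f | f ∈ F ∧ ∀ z, φ z ≤ f z}, f y

theorem stmt_0 {Y : Type*} (F : Set (Y → ℝ≥0∞))
    (hadd : ∀ f ∈ F, ∀ g ∈ F, f + g ∈ F)
    (hsmul : ∀ c : ℝ≥0∞, 0 < c → c < ∞ → ∀ f ∈ F, c • f ∈ F)
    (f₀ : Y → ℝ≥0∞) (hf₀F : f₀ ∈ F) (hf₀pos : ∀ y, 0 < f₀ y) (hf₀fin : ∀ y, f₀ y < ∞)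
    (φ : Y → ℝ≥0∞) (A : Set Y) (α M : ℝ≥0∞)
    (hα : 1 < α) (hα' : α < ∞) (hM : 1 < M) (hM' : M < ∞)
    (hA : ∀ y ∈ A, α * φ y ≤ min (coneEnvelope F φ y) (M * f₀ y)) :
    coneEnvelope F (Set.indicator Aᶜ φ) = coneEnvelope F φ := by
  set ψ := Set.indicator Aᶜ φ with hψ
  have hα0 : α ≠ 0 := by positivity
  have hαtop : α ≠ ∞ := hα'.ne
  have hainv_lt : α⁻¹ < 1 := ENNReal.inv_lt_one.mpr hα
  have hainv_pos : 0 < α⁻¹ := ENNReal.inv_pos.mpr hαtop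
  have hM0 : (0:ℝ≥0∞) < M := lt_trans zero_lt_one hM
  -- the constant sequence c n = M * (α⁻¹)^(n+1)
  set c : ℕ → ℝ≥0∞ := fun n => M * (α⁻¹) ^ (n + 1) with hc
  have hcpos : ∀ n, 0 < c n := fun n => by
    apply ENNReal.mul_pos hM0.ne' (pow_ne_zero _ hainv_pos.ne')
  have hcfin : ∀ n, c n < ∞ := fun n =>
    ENNReal.mul_lt_top hM' (ENNReal.pow_lt_top (lt_of_lt_of_le hainv_lt le_top))
  -- key iteration
  have key : ∀ g ∈ F, (∀ z, ψ z ≤ g z) → ∀ n, ∀ y,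
      coneEnvelope F φ y ≤ g y + c n * f₀ y := by
    intro g hgF hgψ n
    induction n with
    | zero =>
      intro y
      have hh : (g + c 0 • f₀) ∈ {f | f ∈ F ∧ ∀ z, φ z ≤ f z} := by
        refine ⟨hadd g hgF _ (hsmul _ (hcpos 0) (hcfin 0) _ hf₀F), fun z => ?_⟩
        by_cases hz : z ∈ A
        · have h1 : α * φ z ≤ M * f₀ z := (hA z hz).trans (min_le_right _ _)
          have h2 : φ z ≤ α⁻¹ * (M * f₀ z) := by
            rw [← one_mul (φ z), ← ENNReal.inv_mul_cancel hα0 hαtop, mul_assoc]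
            gcongr
          calc φ z ≤ α⁻¹ * (M * f₀ z) := h2
            _ = c 0 * f₀ z := by simp [hc, pow_one]; ring
            _ ≤ g z + c 0 * f₀ z := le_add_self
        · have : φ z = ψ z := by simp [hψ, Set.indicator_of_mem, hz]
          calc φ z = ψ z := this
            _ ≤ g z := hgψ z
            _ ≤ _ := le_self_add
      calc coneEnvelope F φ y ≤ (g + c 0 • f₀) y := by
            rw [coneEnvelope]; exact iInf₂_le _ hh
        _ = g y + c 0 * f₀ y := rfl
    | succ n ih =>
      intro y
      have hh : (g + c (n+1) • f₀) ∈ {f | f ∈ F ∧ ∀ z, φ z ≤ f z} := by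
        refine ⟨hadd g hgF _ (hsmul _ (hcpos (n+1)) (hcfin (n+1)) _ hf₀F), fun z => ?_⟩
        by_cases hz : z ∈ A
        · have h1 : α * φ z ≤ coneEnvelope F φ z := (hA z hz).trans (min_le_left _ _)
          have h1' : α * φ z ≤ g z + c n * f₀ z := h1.trans (ih z)
          have h2 : φ z ≤ α⁻¹ * (g z + c n * f₀ z) := by
            rw [← one_mul (φ z), ← ENNReal.inv_mul_cancel hα0 hαtop, mul_assoc]
            gcongr
          calc φ z ≤ α⁻¹ * (g z + c n * f₀ z) := h2
            _ = α⁻¹ * g z + (α⁻¹ * c n) * f₀ z := by ring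
            _ ≤ g z + c (n+1) * f₀ z := by
                gcongr
                · exact mul_le_of_le_one_left (by positivity) hainv_lt.le
                · simp only [hc]
                  rw [pow_succ]
                  ring_nf
                  exact le_refl _
        · have : φ z = ψ z := by simp [hψ, Set.indicator_of_mem, hz]
          calc φ z = ψ z := this
            _ ≤ g z := hgψ z
            _ ≤ _ := le_self_add
      calc coneEnvelope F φ y ≤ (g + c (n+1) • f₀) y := by
            rw [coneEnvelope]; exact iInf₂_le _ hh
        _ = g y + c (n+1) * f₀ y := rfl
  -- F_φ ≤ g for every dominator g of ψ
  have main : ∀ y, coneEnvelope F φ y ≤ coneEnvelope F ψ y := by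
    intro y
    refine le_iInf₂ fun g hg => ?_
    obtain ⟨hgF, hgψ⟩ := hg
    have htend : Filter.Tendsto (fun n : ℕ => g y + c n * f₀ y) Filter.atTop
        (nhds (g y + 0)) := by
      refine Filter.Tendsto.add tendsto_const_nhds ?_
      have h0 : Filter.Tendsto (fun n : ℕ => (α⁻¹) ^ (n+1)) Filter.atTop (nhds 0) :=
        (ENNReal.tendsto_pow_atTop_nhds_zero_of_lt_one hainv_lt).comp
          (Filter.tendsto_add_atTop_nat 1)
      have := ENNReal.Tendsto.const_mul (a := M * f₀ y) h0
        (Or.inr ((ENNReal.mul_lt_top hM' (hf₀fin y)).ne))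
      simp only [mul_zero] at this
      convert this using 2 with n
      simp [hc]; ring
    have hle : coneEnvelope F φ y ≤ g y + 0 :=
      ge_of_tendsto' htend (fun n => key g hgF hgψ n y)
    simpa using hle
  -- reverse inequality: ψ ≤ φ pointwise
  have rev : ∀ y, coneEnvelope F ψ y ≤ coneEnvelope F φ y := by
    intro y
    refine le_iInf₂ fun g hg => ?_
    refine iInf₂_le g ⟨hg.1, fun z => ?_⟩
    exact (Set.indicator_le_self _ _ z).trans (hg.2 z)
  exact funext fun y => le_antisymm (rev y) (main y)
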